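/- Let f(x) = Ax + b be a totally positive affine transition on ℕ^d (A ∈ M_d(ℕ), b ∈ ℕ^d), let N ∈ ℕ, and let f_N : ℕ → ℕ ∪ {ω} map k to k if k ≤ N and to ω otherwise, extended componentwise and to affine arithmetic by 0·ω = 0, k·ω = ω and ω + k = ω for k ≥ 1. Then for all x ∈ ℕ^d, f(applied in the abstract domain)(f_N(x)) = f_N(f(x)): abstraction by f_N commutes with totally positive affine transitions. -/

import Mathlib

/-- The abstraction ℕ → ℕ ∪ {ω} : identity on {0, ..., N}, ω above N. -/
def absN (N : ℕ) (k : ℕ) : ℕ∞ := if k ≤ N then (k : ℕ∞) else ⊤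

/-- Normalization in the abstract domain ℕ ∪ {ω} (values > N become ω,
ω stays ω). -/
def normN (N : ℕ) (x : ℕ∞) : ℕ∞ := if x ≤ (N : ℕ∞) then x else ⊤

/-- abstraction by f_N commutes with totally positive affine
transitions f(x) = Ax + b: applying f in the abstract domain
ℕ ∪ {ω} (with 0·ω = 0, k·ω = ω for k ≥ 1, ω + k = ω) to f_N(x) gives
f_N(f(x)). -/
theorem stmt_15 (d : ℕ) (A : Matrix (Fin d) (Fin d) ℕ) (b : Fin d → ℕ)
    (N : ℕ) (x : Fin d → ℕ) :
    (fun i => normN N (∑ j, (A i j : ℕ∞) * absN N (x j) + (b i : ℕ∞))) =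
    (fun i => absN N (∑ j, A i j * x j + b i)) := by
  funext i
  by_cases h : ∀ j, A i j ≠ 0 → x j ≤ N
  · have hterm : ∀ j, (A i j : ℕ∞) * absN N (x j) = ((A i j * x j : ℕ) : ℕ∞) := by
      intro j
      by_cases hA : A i j = 0
      · simp [hA]
      · rw [absN, if_pos (h j hA)]
        push_cast
        ring
    have hsum : (∑ j, (A i j : ℕ∞) * absN N (x j) + (b i : ℕ∞))
        = ((∑ j, A i j * x j + b i : ℕ) : ℕ∞) := by
      simp only [hterm]
      push_cast
      ring
    rw [hsum, normN, absN]
    by_cases hle : ∑ j, A i j * x j + b i ≤ N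
    · rw [if_pos (by exact_mod_cast hle), if_pos hle]
    · rw [if_neg (by exact_mod_cast hle), if_neg hle]
  · push_neg at h
    obtain ⟨j, hA, hx⟩ := h
    have h1 : (A i j : ℕ∞) * absN N (x j) = ⊤ := by
      rw [absN, if_neg (not_le.mpr hx)]
      exact ENat.mul_top (by exact_mod_cast hA)
    have h2 : (∑ j, (A i j : ℕ∞) * absN N (x j)) = ⊤ := by
      refine top_le_iff.mp ?_
      calc (⊤ : ℕ∞) = (A i j : ℕ∞) * absN N (x j) := h1.symm
        _ ≤ _ := Finset.single_le_sum (f := fun k => (A i k : ℕ∞) * absN N (x k)) (fun k _ => zero_le) (Finset.mem_univ j)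
    have h3 : N < ∑ j, A i j * x j + b i := by
      calc N < x j := hx
        _ ≤ A i j * x j := Nat.le_mul_of_pos_left _ (Nat.pos_of_ne_zero hA)
        _ ≤ ∑ k, A i k * x k := Finset.single_le_sum (f := fun k => A i k * x k) (fun k _ => Nat.zero_le _)
            (Finset.mem_univ j)
        _ ≤ _ := Nat.le_add_right _ _
    rw [h2, normN, absN, if_neg (not_le.mpr h3)]
    simp
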